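/- arXiv:1703.10509 — 3 statements merged into one kernel-verified Lean document; each statement's English description precedes it below -/
import Mathlib

section
/- Pohozaev-type identity for bound states: Let d ≥ 1, γ₁, γ₂ > 0, β, ω ∈ ℝ, and let P, Q : ℝ^{d+1} → ℝ be real-valued Schwartz functions solving −ωP + Δ_{γ₁}P + PQ = 0 and −(4ω+β)Q + Δ_{γ₂}Q + ½P² = 0 pointwise. Then ∫_{ℝ^{d+1}} (|∇P|²_{γ₁} + |∇Q|²_{γ₂}) dx = ((d+1)/4) ∫_{ℝ^{d+1}} P²Q dx. -/
noncomputable section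

open MeasureTheory Complex Finset

/-- The underlying space `ℝ^{d+1}`. -/
abbrev Sp (d : ℕ) := EuclideanSpace ℝ (Fin (d + 1))

variable {d : ℕ}

/-- Partial derivative in the `j`-th coordinate direction. -/
def pdv {F : Type*} [NormedAddCommGroup F] [NormedSpace ℝ F]
    (j : Fin (d + 1)) (f : Sp d → F) (x : Sp d) : F :=
  fderiv ℝ f x (EuclideanSpace.single j 1)

/-- Anisotropic gradient square `|∇f|²_γ = Σ_{j=1}^d |∂_j f|² + γ|∂_{d+1} f|²`. -/
def gradSq {F : Type*} [NormedAddCommGroup F] [NormedSpace ℝ F]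
    (γ : ℝ) (f : Sp d → F) (x : Sp d) : ℝ :=
  (∑ j : Fin d, ‖pdv j.castSucc f x‖ ^ 2) + γ * ‖pdv (Fin.last d) f x‖ ^ 2

/-- Full (isotropic) gradient square `|∇f|² = Σ_{j=1}^{d+1} |∂_j f|²`. -/
def fullGradSq {F : Type*} [NormedAddCommGroup F] [NormedSpace ℝ F]
    (f : Sp d → F) (x : Sp d) : ℝ :=
  ∑ j : Fin (d + 1), ‖pdv j f x‖ ^ 2

/-- Transverse gradient square `|∇_⊥ f|² = Σ_{j=1}^{d} |∂_j f|²`. -/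
def perpGradSq {F : Type*} [NormedAddCommGroup F] [NormedSpace ℝ F]
    (f : Sp d → F) (x : Sp d) : ℝ :=
  ∑ j : Fin d, ‖pdv j.castSucc f x‖ ^ 2

/-- Anisotropic Laplacian `Δ_γ = ∂²_{x₁} + … + ∂²_{x_d} + γ ∂²_{x_{d+1}}`. -/
def lap {F : Type*} [NormedAddCommGroup F] [NormedSpace ℝ F]
    (γ : ℝ) (f : Sp d → F) (x : Sp d) : F :=
  (∑ j : Fin d, pdv j.castSucc (fun y => pdv j.castSucc f y) x)
    + γ • pdv (Fin.last d) (fun y => pdv (Fin.last d) f y) x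

/-- Mass `M(u,v) = ∫ (|u|² + 4|v|²)`. -/
def mass (u v : Sp d → ℂ) : ℝ :=
  ∫ x : Sp d, (‖u x‖ ^ 2 + 4 * ‖v x‖ ^ 2)

/-- Energy `E(u,v) = ½∫ (|∇u|²_{γ₁} + |∇v|²_{γ₂} + β|v|² − Re(ū²v))`. -/
def energy (γ₁ γ₂ β : ℝ) (u v : Sp d → ℂ) : ℝ :=
  (1 / 2) * ∫ x : Sp d,
    (gradSq γ₁ u x + gradSq γ₂ v x + β * ‖v x‖ ^ 2 - ((starRingEnd ℂ) (u x) ^ 2 * v x).re)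

/-- `J(u,v) = Re ∫ ū² v`. -/
def Jfun (u v : Sp d → ℂ) : ℝ :=
  ∫ x : Sp d, ((starRingEnd ℂ) (u x) ^ 2 * v x).re

/-- `K(u,v) = ∫ (|∇u|²_{γ₁} + |∇v|²_{γ₂})`. -/
def Kfun (γ₁ γ₂ : ℝ) (u v : Sp d → ℂ) : ℝ :=
  ∫ x : Sp d, (gradSq γ₁ u x + gradSq γ₂ v x)

/-- `x^γ · ∇f` where `x^γ = (x₁,…,x_d, γ x_{d+1})`. -/
def xgDot (γ : ℝ) (f : Sp d → ℂ) (x : Sp d) : ℂ :=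
  (∑ j : Fin d, (x j.castSucc : ℂ) * pdv j.castSucc f x)
    + ((γ * x (Fin.last d) : ℝ) : ℂ) * pdv (Fin.last d) f x

/-- `x_⊥ · ∇_⊥ f`. -/
def perpDot (f : Sp d → ℂ) (x : Sp d) : ℂ :=
  ∑ j : Fin d, (x j.castSucc : ℂ) * pdv j.castSucc f x

/-- `|x_⊥|²`. -/
def perpNormSq (x : Sp d) : ℝ := ∑ j : Fin d, (x j.castSucc) ^ 2

/-- Energy for real-valued pairs with `β = 0`:
`E(P,Q) = ½∫ (|∇P|²_{γ₁} + |∇Q|²_{γ₂} − P²Q)`. -/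
def energyR (γ₁ γ₂ : ℝ) (P Q : Sp d → ℝ) : ℝ :=
  (1 / 2) * ∫ x : Sp d, (gradSq γ₁ P x + gradSq γ₂ Q x - (P x) ^ 2 * Q x)

/-- Gagliardo–Nirenberg quotient `GN(u,v) = M^{3/2-(d+1)/4} K^{(d+1)/4} / J`. -/
def GNq (γ₁ γ₂ : ℝ) (u v : Sp d → ℂ) : ℝ :=
  mass u v ^ ((3 : ℝ) / 2 - ((d : ℝ) + 1) / 4)
    * Kfun γ₁ γ₂ u v ^ (((d : ℝ) + 1) / 4) / Jfun u v


/-! ### Auxiliary development for the Pohozaev identity -/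

section PohozaevAux

variable {d : ℕ}

/-- Standard basis vector. -/
def eV (k : Fin (d + 1)) : Sp d := EuclideanSpace.single k 1

/-- Partial derivative as a Schwartz map. -/
def DD (k : Fin (d + 1)) (f : SchwartzMap (Sp d) ℝ) : SchwartzMap (Sp d) ℝ :=
  LineDeriv.lineDerivOp (eV k) f

lemma schwartz_tg (f : SchwartzMap (Sp d) ℝ) : Function.HasTemperateGrowth ⇑f := by
  refine ⟨f.smooth', fun n => ⟨0, SchwartzMap.seminorm ℝ 0 n f, fun x => ?_⟩⟩
  simpa using SchwartzMap.norm_iteratedFDeriv_le_seminorm ℝ f n x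

/-- Pointwise product of two Schwartz maps, as a Schwartz map. -/
def S2 (f g : SchwartzMap (Sp d) ℝ) : SchwartzMap (Sp d) ℝ :=
  SchwartzMap.bilinLeftCLM (ContinuousLinearMap.mul ℝ ℝ) (schwartz_tg g) f

/-- Product of a Schwartz map with a coordinate function, as a Schwartz map. -/
def XM (j : Fin (d + 1)) (f : SchwartzMap (Sp d) ℝ) : SchwartzMap (Sp d) ℝ :=
  SchwartzMap.bilinLeftCLM (ContinuousLinearMap.mul ℝ ℝ)
    ((EuclideanSpace.proj j : Sp d →L[ℝ] ℝ).hasTemperateGrowth) f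

@[simp] lemma S2_apply (f g : SchwartzMap (Sp d) ℝ) (x : Sp d) : S2 f g x = f x * g x := rfl
@[simp] lemma XM_apply (j : Fin (d + 1)) (f : SchwartzMap (Sp d) ℝ) (x : Sp d) :
    XM j f x = f x * x j := rfl

lemma abs_coord_le (x : Sp d) (j : Fin (d + 1)) : |x j| ≤ ‖x‖ := by
  rw [EuclideanSpace.norm_eq]
  have h1 : |x j| = Real.sqrt (|x j| ^ 2) := by rw [Real.sqrt_sq (abs_nonneg _)]
  rw [h1]
  apply Real.sqrt_le_sqrt
  have := Finset.single_le_sum (f := fun i => ‖x i‖ ^ 2)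
    (fun i _ => by positivity) (Finset.mem_univ j)
  simpa [Real.norm_eq_abs] using this

lemma int_coord_mul (j : Fin (d + 1)) (f : SchwartzMap (Sp d) ℝ) :
    Integrable (fun x : Sp d => x j * f x) := by
  have hb : Integrable (fun x : Sp d => ‖x‖ ^ 1 * ‖f x‖) := f.integrable_pow_mul volume 1
  refine hb.mono' ?_ ?_
  · exact (((EuclideanSpace.proj j : Sp d →L[ℝ] ℝ).continuous).mul
      f.continuous).aestronglyMeasurable
  · filter_upwards with x
    rw [Real.norm_eq_abs, abs_mul, pow_one]
    exact mul_le_mul_of_nonneg_right (abs_coord_le x j) (abs_nonneg _)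

lemma int_sq (f : SchwartzMap (Sp d) ℝ) : Integrable (fun x : Sp d => (f x) ^ 2) :=
  (S2 f f).integrable.congr (by filter_upwards with x; rw [S2_apply, sq])

lemma int_sq_mul (f g : SchwartzMap (Sp d) ℝ) :
    Integrable (fun x : Sp d => (f x) ^ 2 * g x) :=
  (S2 (S2 f f) g).integrable.congr (by filter_upwards with x; rw [S2_apply, S2_apply, sq])

lemma ibp (f g : SchwartzMap (Sp d) ℝ) (k : Fin (d + 1)) :
    ∫ x : Sp d, f x * DD k g x = -∫ x : Sp d, DD k f x * g x :=
  integral_mul_fderiv_eq_neg_fderiv_mul_of_integrable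
    (v := eV k) ((S2 (DD k f) g).integrable) ((S2 f (DD k g)).integrable)
    ((S2 f g).integrable) (fun x _ => f.differentiableAt) (fun x _ => g.differentiableAt)

lemma ibp' (f g : SchwartzMap (Sp d) ℝ) (k : Fin (d + 1)) :
    ∫ x : Sp d, DD k f x * g x = -∫ x : Sp d, f x * DD k g x := by
  have := ibp f g k; linarith

lemma fderiv_coord (j k : Fin (d + 1)) (x : Sp d) :
    fderiv ℝ (fun y : Sp d => y j) x (eV k) = if k = j then 1 else 0 := by
  have h : (fun y : Sp d => y j) = ⇑(EuclideanSpace.proj j : Sp d →L[ℝ] ℝ) := rfl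
  rw [h, ContinuousLinearMap.fderiv]
  show (eV k) j = _
  rw [eV, EuclideanSpace.single_apply]
  simp [eq_comm]

lemma ibp_coord (h : SchwartzMap (Sp d) ℝ) (j : Fin (d + 1)) :
    ∫ x : Sp d, x j * DD j h x = -∫ x : Sp d, h x := by
  have h1 : Integrable (fun x : Sp d => fderiv ℝ (fun y : Sp d => y j) x (eV j) * h x) := by
    apply h.integrable.congr
    filter_upwards with x
    rw [fderiv_coord j j x, if_pos rfl, one_mul]
  have key := integral_mul_fderiv_eq_neg_fderiv_mul_of_integrable
    (μ := (volume : Measure (Sp d))) (f := fun y : Sp d => y j) (g := ⇑h) (v := eV j)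
    h1 (int_coord_mul j (DD j h)) (int_coord_mul j h)
    (fun x _ => (EuclideanSpace.proj j : Sp d →L[ℝ] ℝ).differentiableAt) (fun x _ => h.differentiableAt)
  have h2 : ∫ x : Sp d, x j * DD j h x
      = -∫ x : Sp d, fderiv ℝ (fun y : Sp d => y j) x (eV j) * h x := key
  rw [h2, neg_inj]
  apply integral_congr_ae; filter_upwards with x
  rw [fderiv_coord j j x, if_pos rfl, one_mul]

lemma DD_mul (f g : SchwartzMap (Sp d) ℝ) (k : Fin (d + 1)) (x : Sp d) :
    DD k (S2 f g) x = DD k f x * g x + f x * DD k g x := by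
  show fderiv ℝ (fun y => f y * g y) x (eV k) = _
  rw [fderiv_fun_mul f.differentiableAt g.differentiableAt]
  show f x * fderiv ℝ (⇑g) x (eV k) + g x * fderiv ℝ (⇑f) x (eV k) = _
  show f x * DD k g x + g x * DD k f x = _
  ring

lemma DD_XM (j k : Fin (d + 1)) (f : SchwartzMap (Sp d) ℝ) (x : Sp d) :
    DD k (XM j f) x = f x * (if k = j then 1 else 0) + x j * DD k f x := by
  show fderiv ℝ (fun y => f y * y j) x (eV k) = _
  have hdc : DifferentiableAt ℝ (fun y : Sp d => y j) x :=
    (EuclideanSpace.proj j : Sp d →L[ℝ] ℝ).differentiableAt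
  rw [fderiv_fun_mul f.differentiableAt hdc]
  show f x * fderiv ℝ (fun y : Sp d => y j) x (eV k) + x j * fderiv ℝ (⇑f) x (eV k) = _
  rw [fderiv_coord]
  rfl

lemma DD_comm (f : SchwartzMap (Sp d) ℝ) (k j : Fin (d + 1)) (x : Sp d) :
    DD k (DD j f) x = DD j (DD k f) x := by
  have h1 : ∀ (a b : Fin (d + 1)), DD a (DD b f) x = fderiv ℝ (fderiv ℝ f) x (eV a) (eV b) := by
    intro a b
    have hd : DifferentiableAt ℝ (fderiv ℝ (⇑f)) x :=
      ((f.smooth'.fderiv_right (m := (⊤ : ℕ∞)) le_rfl).differentiable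
        (by simp)).differentiableAt
    show fderiv ℝ (fun y => (fderiv ℝ (⇑f) y) (eV b)) x (eV a) = _
    rw [fderiv_clm_apply hd (differentiableAt_const _)]
    simp
  rw [h1, h1]
  exact ((f.smooth 2).contDiffAt.isSymmSndFDerivAt (by simp)).eq _ _

lemma C1 (u : SchwartzMap (Sp d) ℝ) (k : Fin (d + 1)) :
    ∫ x : Sp d, DD k (DD k u) x * u x = -∫ x : Sp d, (DD k u x) ^ 2 := by
  rw [ibp' (DD k u) u k, neg_inj]
  apply integral_congr_ae; filter_upwards with x; rw [sq]

lemma C2 (u : SchwartzMap (Sp d) ℝ) (j : Fin (d + 1)) :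
    ∫ x : Sp d, x j * (u x * DD j u x) = -((1:ℝ)/2) * ∫ x : Sp d, (u x) ^ 2 := by
  have e1 : (fun x : Sp d => x j * (u x * DD j u x))
      = fun x : Sp d => ((1:ℝ)/2) * (x j * DD j (S2 u u) x) := by
    funext x; rw [DD_mul]; ring
  rw [e1, integral_const_mul, ibp_coord (S2 u u) j]
  have e2 : ∫ x : Sp d, S2 u u x = ∫ x : Sp d, (u x) ^ 2 := by
    apply integral_congr_ae; filter_upwards with x; rw [S2_apply, sq]
  rw [e2]; ring

lemma C3 (u : SchwartzMap (Sp d) ℝ) (k j : Fin (d + 1)) :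
    ∫ x : Sp d, DD k (DD k u) x * (x j * DD j u x)
      = ((1:ℝ)/2 - if k = j then 1 else 0) * ∫ x : Sp d, (DD k u x) ^ 2 := by
  have e0 : (fun x : Sp d => DD k (DD k u) x * (x j * DD j u x))
      = fun x : Sp d => DD k (DD k u) x * XM j (DD j u) x := by
    funext x; rw [XM_apply]; ring
  rw [e0, ibp' (DD k u) (XM j (DD j u)) k]
  have e1 : (fun x : Sp d => DD k u x * DD k (XM j (DD j u)) x)
      = fun x : Sp d => (if k = j then 1 else 0) * (DD k u x * DD j u x)
          + x j * (DD k u x * DD j (DD k u) x) := by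
    funext x; rw [DD_XM, DD_comm u k j]; ring
  rw [e1]
  have hint1 : Integrable (fun x : Sp d =>
      (if k = j then 1 else 0 : ℝ) * (DD k u x * DD j u x)) :=
    (S2 (DD k u) (DD j u)).integrable.const_mul _
  have hint2 : Integrable (fun x : Sp d => x j * (DD k u x * DD j (DD k u) x)) :=
    int_coord_mul j (S2 (DD k u) (DD j (DD k u)))
  rw [integral_add hint1 hint2, integral_const_mul, C2 (DD k u) j]
  by_cases hkj : k = j
  · subst hkj
    simp only [if_pos rfl]
    have h3 : ∫ x : Sp d, DD k u x * DD k u x = ∫ x : Sp d, (DD k u x) ^ 2 := by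
      apply integral_congr_ae; filter_upwards with x; rw [sq]
    rw [h3]; ring
  · simp only [if_neg hkj, zero_mul, integral_zero]; ring

/-- Weight of the anisotropic operators. -/
def aW (γ : ℝ) (k : Fin (d + 1)) : ℝ := if k = Fin.last d then γ else 1

lemma lap_eq (γ : ℝ) (u : SchwartzMap (Sp d) ℝ) (x : Sp d) :
    lap γ (⇑u) x = ∑ k : Fin (d + 1), aW γ k * DD k (DD k u) x := by
  rw [Fin.sum_univ_castSucc]
  show (∑ j : Fin d, DD j.castSucc (DD j.castSucc u) x)
      + γ • DD (Fin.last d) (DD (Fin.last d) u) x = _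
  rw [smul_eq_mul]
  congr 1
  · apply Finset.sum_congr rfl; intro j _
    rw [aW, if_neg (Fin.castSucc_lt_last j).ne, one_mul]
  · rw [aW, if_pos rfl]

lemma gradSq_eq (γ : ℝ) (u : SchwartzMap (Sp d) ℝ) (x : Sp d) :
    gradSq γ (⇑u) x = ∑ k : Fin (d + 1), aW γ k * (DD k u x) ^ 2 := by
  rw [Fin.sum_univ_castSucc]
  show (∑ j : Fin d, ‖DD j.castSucc u x‖ ^ 2) + γ * ‖DD (Fin.last d) u x‖ ^ 2 = _
  congr 1
  · apply Finset.sum_congr rfl; intro j _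
    rw [show aW γ j.castSucc = 1 from if_neg (Fin.castSucc_lt_last j).ne, one_mul,
      Real.norm_eq_abs, _root_.sq_abs]
  · rw [show aW γ (Fin.last d) = γ from if_pos rfl, Real.norm_eq_abs, _root_.sq_abs]

lemma int_gradSq (γ : ℝ) (u : SchwartzMap (Sp d) ℝ) :
    Integrable (fun x : Sp d => gradSq γ (⇑u) x) := by
  have e : (fun x : Sp d => gradSq γ (⇑u) x)
      = fun x : Sp d => ∑ k : Fin (d + 1), aW γ k * (DD k u x) ^ 2 :=
    funext (gradSq_eq γ u)
  rw [e]
  exact integrable_finset_sum _ (fun k _ => (int_sq (DD k u)).const_mul _)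

lemma int_gradSq' (γ : ℝ) (u : SchwartzMap (Sp d) ℝ) :
    Integrable (gradSq γ (⇑u)) := int_gradSq γ u

/-- weak formulation tested against `u` itself -/
lemma W1 (γ : ℝ) (u g : SchwartzMap (Sp d) ℝ) (hlap : ∀ x, lap γ (⇑u) x = g x) :
    ∫ x : Sp d, gradSq γ (⇑u) x = -∫ x : Sp d, g x * u x := by
  have e1 : (fun x : Sp d => g x * u x)
      = fun x : Sp d => ∑ k : Fin (d + 1), aW γ k * (DD k (DD k u) x * u x) := by
    funext x
    rw [← hlap x, lap_eq, Finset.sum_mul]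
    exact Finset.sum_congr rfl (fun k _ => by ring)
  have hint : ∀ k : Fin (d + 1), Integrable
      (fun x : Sp d => aW γ k * (DD k (DD k u) x * u x)) := by
    intro k
    apply ((S2 (DD k (DD k u)) u).integrable.const_mul (aW γ k)).congr
    filter_upwards with x; rw [S2_apply]
  rw [e1, integral_finset_sum _ (fun k _ => hint k)]
  have e2 : ∀ k : Fin (d + 1), ∫ x : Sp d, aW γ k * (DD k (DD k u) x * u x)
      = aW γ k * -∫ x : Sp d, (DD k u x) ^ 2 := by
    intro k; rw [integral_const_mul, C1]
  rw [Finset.sum_congr rfl (fun k _ => e2 k)]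
  have e3 : (fun x : Sp d => gradSq γ (⇑u) x)
      = fun x : Sp d => ∑ k : Fin (d + 1), aW γ k * (DD k u x) ^ 2 :=
    funext (gradSq_eq γ u)
  rw [e3, integral_finset_sum _ (fun k _ => (int_sq (DD k u)).const_mul _)]
  rw [← Finset.sum_neg_distrib]
  apply Finset.sum_congr rfl; intro k _
  rw [integral_const_mul]; ring

/-- weak formulation tested against `x · ∇u` -/
lemma W2 (γ : ℝ) (u g : SchwartzMap (Sp d) ℝ) (hlap : ∀ x, lap γ (⇑u) x = g x) :
    ∑ j : Fin (d + 1), ∫ x : Sp d, g x * (x j * DD j u x)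
      = (((d : ℝ) - 1) / 2) * ∫ x : Sp d, gradSq γ (⇑u) x := by
  have per : ∀ j : Fin (d + 1), ∫ x : Sp d, g x * (x j * DD j u x)
      = ∑ k : Fin (d + 1),
          aW γ k * (((1:ℝ)/2 - if k = j then 1 else 0) * ∫ x : Sp d, (DD k u x) ^ 2) := by
    intro j
    have e1 : (fun x : Sp d => g x * (x j * DD j u x))
        = fun x : Sp d => ∑ k : Fin (d + 1),
            aW γ k * (DD k (DD k u) x * (x j * DD j u x)) := by
      funext x
      rw [← hlap x, lap_eq, Finset.sum_mul]
      exact Finset.sum_congr rfl (fun k _ => by ring)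
    have hint : ∀ k : Fin (d + 1), Integrable
        (fun x : Sp d => aW γ k * (DD k (DD k u) x * (x j * DD j u x))) := by
      intro k
      apply ((int_coord_mul j (S2 (DD k (DD k u)) (DD j u))).const_mul (aW γ k)).congr
      filter_upwards with x
      rw [S2_apply]; ring
    rw [e1, integral_finset_sum _ (fun k _ => hint k)]
    apply Finset.sum_congr rfl; intro k _
    rw [integral_const_mul, C3]
  rw [Finset.sum_congr rfl (fun j _ => per j), Finset.sum_comm]
  have e3 : ∫ x : Sp d, gradSq γ (⇑u) x
      = ∑ k : Fin (d + 1), aW γ k * ∫ x : Sp d, (DD k u x) ^ 2 := by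
    rw [show (fun x : Sp d => gradSq γ (⇑u) x)
        = fun x : Sp d => ∑ k : Fin (d + 1), aW γ k * (DD k u x) ^ 2 from
      funext (gradSq_eq γ u)]
    rw [integral_finset_sum _ (fun k _ => (int_sq (DD k u)).const_mul _)]
    exact Finset.sum_congr rfl (fun k _ => integral_const_mul _ _)
  rw [e3, Finset.mul_sum]
  apply Finset.sum_congr rfl; intro k _
  have hcount : ∑ j : Fin (d + 1), ((1:ℝ)/2 - if k = j then 1 else 0)
      = ((d : ℝ) - 1) / 2 := by
    rw [Finset.sum_sub_distrib, Finset.sum_const, Finset.sum_ite_eq]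
    simp only [Finset.card_univ, Fintype.card_fin, nsmul_eq_mul, Finset.mem_univ, if_pos]
    push_cast; ring
  calc ∑ j : Fin (d + 1),
        aW γ k * (((1:ℝ)/2 - if k = j then 1 else 0) * ∫ x : Sp d, (DD k u x) ^ 2)
      = (∑ j : Fin (d + 1), ((1:ℝ)/2 - if k = j then 1 else 0))
          * (aW γ k * ∫ x : Sp d, (DD k u x) ^ 2) := by
        rw [Finset.sum_mul]
        exact Finset.sum_congr rfl (fun j _ => by ring)
    _ = ((d : ℝ) - 1) / 2 * (aW γ k * ∫ x : Sp d, (DD k u x) ^ 2) := by rw [hcount]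


lemma C4 (P Q : SchwartzMap (Sp d) ℝ) (j : Fin (d + 1)) :
    (∫ x : Sp d, x j * (S2 (S2 P Q) (DD j P)) x)
      + ((1:ℝ)/2) * ∫ x : Sp d, x j * (S2 (S2 P P) (DD j Q)) x
    = -((1:ℝ)/2) * ∫ x : Sp d, (P x) ^ 2 * Q x := by
  have hibp := ibp_coord (S2 (S2 P P) Q) j
  have e : (fun x : Sp d => x j * DD j (S2 (S2 P P) Q) x)
      = fun x : Sp d => 2 * (x j * (S2 (S2 P Q) (DD j P)) x)
          + x j * (S2 (S2 P P) (DD j Q)) x := by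
    funext x
    rw [DD_mul, DD_mul]
    simp only [S2_apply]
    ring
  rw [e] at hibp
  have h1 : Integrable (fun x : Sp d => 2 * (x j * (S2 (S2 P Q) (DD j P)) x)) :=
    (int_coord_mul j (S2 (S2 P Q) (DD j P))).const_mul 2
  have h2 := int_coord_mul j (S2 (S2 P P) (DD j Q))
  rw [integral_add h1 h2, integral_const_mul] at hibp
  have e2 : ∫ x : Sp d, S2 (S2 P P) Q x = ∫ x : Sp d, (P x) ^ 2 * Q x := by
    apply integral_congr_ae; filter_upwards with x
    rw [S2_apply, S2_apply, sq]
  rw [e2] at hibp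
  linarith

end PohozaevAux

/-- Pohozaev-type identity for real Schwartz bound states. -/
theorem pohozaev_identity
    (d : ℕ) (hd : 1 ≤ d) (γ₁ γ₂ β ω : ℝ) (hγ₁ : 0 < γ₁) (hγ₂ : 0 < γ₂)
    (P Q : SchwartzMap (Sp d) ℝ)
    (hP : ∀ x, -ω * P x + lap γ₁ (⇑P) x + P x * Q x = 0)
    (hQ : ∀ x, -(4 * ω + β) * Q x + lap γ₂ (⇑Q) x + (1 / 2) * (P x) ^ 2 = 0) :
    (∫ x : Sp d, (gradSq γ₁ (⇑P) x + gradSq γ₂ (⇑Q) x))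
      = (((d : ℝ) + 1) / 4) * ∫ x : Sp d, (P x) ^ 2 * Q x := by
  have hlapP : ∀ x, lap γ₁ (⇑P) x = (ω • P - S2 P Q) x := by
    intro x
    have h := hP x
    simp only [SchwartzMap.sub_apply, SchwartzMap.smul_apply, S2_apply, smul_eq_mul]
    linarith
  have hlapQ : ∀ x, lap γ₂ (⇑Q) x = ((4 * ω + β) • Q - (1/2 : ℝ) • S2 P P) x := by
    intro x
    have h := hQ x
    simp only [SchwartzMap.sub_apply, SchwartzMap.smul_apply, S2_apply, smul_eq_mul]
    have hs : P x * P x = (P x) ^ 2 := (sq (P x)).symm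
    rw [hs]
    linarith
  have E1 : ∫ x : Sp d, gradSq γ₁ (⇑P) x
      = -(ω * ∫ x : Sp d, (P x) ^ 2) + ∫ x : Sp d, (P x) ^ 2 * Q x := by
    rw [W1 γ₁ P _ hlapP]
    have e : (fun x : Sp d => (ω • P - S2 P Q) x * P x)
        = fun x : Sp d => ω * (P x) ^ 2 - (P x) ^ 2 * Q x := by
      funext x
      simp only [SchwartzMap.sub_apply, SchwartzMap.smul_apply, S2_apply, smul_eq_mul]
      ring
    rw [e, integral_sub ((int_sq P).const_mul ω) (int_sq_mul P Q), integral_const_mul]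
    ring
  have E2 : ∫ x : Sp d, gradSq γ₂ (⇑Q) x
      = -((4 * ω + β) * ∫ x : Sp d, (Q x) ^ 2)
          + ((1:ℝ)/2) * ∫ x : Sp d, (P x) ^ 2 * Q x := by
    rw [W1 γ₂ Q _ hlapQ]
    have e : (fun x : Sp d => ((4 * ω + β) • Q - (1/2 : ℝ) • S2 P P) x * Q x)
        = fun x : Sp d => (4 * ω + β) * (Q x) ^ 2 - ((1:ℝ)/2) * ((P x) ^ 2 * Q x) := by
      funext x
      simp only [SchwartzMap.sub_apply, SchwartzMap.smul_apply, S2_apply, smul_eq_mul]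
      ring
    rw [e, integral_sub ((int_sq Q).const_mul _) ((int_sq_mul P Q).const_mul _),
      integral_const_mul, integral_const_mul]
    ring
  have E3P : (((d : ℝ) - 1) / 2) * ∫ x : Sp d, gradSq γ₁ (⇑P) x
      = ((d : ℝ) + 1) * (ω * (-((1:ℝ)/2) * ∫ x : Sp d, (P x) ^ 2))
          - ∑ j : Fin (d + 1), ∫ x : Sp d, x j * (S2 (S2 P Q) (DD j P)) x := by
    rw [← W2 γ₁ P _ hlapP]
    have per : ∀ j : Fin (d + 1), ∫ x : Sp d, (ω • P - S2 P Q) x * (x j * DD j P x)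
        = ω * (-((1:ℝ)/2) * ∫ x : Sp d, (P x) ^ 2)
            - ∫ x : Sp d, x j * (S2 (S2 P Q) (DD j P)) x := by
      intro j
      have e : (fun x : Sp d => (ω • P - S2 P Q) x * (x j * DD j P x))
          = fun x : Sp d => ω * (x j * (P x * DD j P x))
              - x j * (S2 (S2 P Q) (DD j P)) x := by
        funext x
        simp only [SchwartzMap.sub_apply, SchwartzMap.smul_apply, S2_apply, smul_eq_mul]
        ring
      have h1 : Integrable (fun x : Sp d => ω * (x j * (P x * DD j P x))) := by
        apply ((int_coord_mul j (S2 P (DD j P))).const_mul ω).congr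
        filter_upwards with x; rw [S2_apply]
      rw [e, integral_sub h1 (int_coord_mul j (S2 (S2 P Q) (DD j P))),
        integral_const_mul, C2 P j]
    rw [Finset.sum_congr rfl (fun j _ => per j), Finset.sum_sub_distrib, Finset.sum_const]
    simp only [Finset.card_univ, Fintype.card_fin, nsmul_eq_mul]
    push_cast; ring
  have E3Q : (((d : ℝ) - 1) / 2) * ∫ x : Sp d, gradSq γ₂ (⇑Q) x
      = ((d : ℝ) + 1) * ((4 * ω + β) * (-((1:ℝ)/2) * ∫ x : Sp d, (Q x) ^ 2))
          - ((1:ℝ)/2) * ∑ j : Fin (d + 1),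
              ∫ x : Sp d, x j * (S2 (S2 P P) (DD j Q)) x := by
    rw [← W2 γ₂ Q _ hlapQ]
    have per : ∀ j : Fin (d + 1),
        ∫ x : Sp d, ((4 * ω + β) • Q - (1/2 : ℝ) • S2 P P) x * (x j * DD j Q x)
        = (4 * ω + β) * (-((1:ℝ)/2) * ∫ x : Sp d, (Q x) ^ 2)
            - ((1:ℝ)/2) * ∫ x : Sp d, x j * (S2 (S2 P P) (DD j Q)) x := by
      intro j
      have e : (fun x : Sp d => ((4 * ω + β) • Q - (1/2 : ℝ) • S2 P P) x * (x j * DD j Q x))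
          = fun x : Sp d => (4 * ω + β) * (x j * (Q x * DD j Q x))
              - ((1:ℝ)/2) * (x j * (S2 (S2 P P) (DD j Q)) x) := by
        funext x
        simp only [SchwartzMap.sub_apply, SchwartzMap.smul_apply, S2_apply, smul_eq_mul]
        ring
      have h1 : Integrable (fun x : Sp d => (4 * ω + β) * (x j * (Q x * DD j Q x))) := by
        apply ((int_coord_mul j (S2 Q (DD j Q))).const_mul (4 * ω + β)).congr
        filter_upwards with x; rw [S2_apply]
      have h2 : Integrable (fun x : Sp d =>
          ((1:ℝ)/2) * (x j * (S2 (S2 P P) (DD j Q)) x)) :=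
        (int_coord_mul j (S2 (S2 P P) (DD j Q))).const_mul _
      rw [e, integral_sub h1 h2, integral_const_mul, integral_const_mul, C2 Q j]
    rw [Finset.sum_congr rfl (fun j _ => per j), Finset.sum_sub_distrib, Finset.sum_const,
      ← Finset.mul_sum]
    simp only [Finset.card_univ, Fintype.card_fin, nsmul_eq_mul]
    push_cast; ring
  have HC4 : (∑ j : Fin (d + 1), ∫ x : Sp d, x j * (S2 (S2 P Q) (DD j P)) x)
      + ((1:ℝ)/2) * ∑ j : Fin (d + 1), ∫ x : Sp d, x j * (S2 (S2 P P) (DD j Q)) x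
      = ((d : ℝ) + 1) * (-((1:ℝ)/2) * ∫ x : Sp d, (P x) ^ 2 * Q x) := by
    rw [Finset.mul_sum, ← Finset.sum_add_distrib,
      Finset.sum_congr rfl (fun j _ => C4 P Q j), Finset.sum_const]
    simp only [Finset.card_univ, Fintype.card_fin, nsmul_eq_mul]
    push_cast; ring
  rw [integral_add (int_gradSq γ₁ P) (int_gradSq γ₂ Q)]
  linear_combination (-1 : ℝ) * E3P + (-1 : ℝ) * E3Q + HC4
    + (((d : ℝ) + 1) / 2) * E1 + (((d : ℝ) + 1) / 2) * E2
end
end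

section
/- Energy of bound states when β = 0: Let d ≥ 1, γ₁, γ₂ > 0, ω ∈ ℝ, β = 0, and let P, Q : ℝ^{d+1} → ℝ be real-valued Schwartz functions solving −ωP + Δ_{γ₁}P + PQ = 0 and −4ωQ + Δ_{γ₂}Q + ½P² = 0 pointwise. Then E(P,Q) = ((d−3)/(2(d+1))) ∫_{ℝ^{d+1}} (|∇P|²_{γ₁} + |∇Q|²_{γ₂}) dx. In particular, if d = 3 then E(P,Q) = 0 and ∫_{ℝ⁴} (|∇P|²_{γ₁} + |∇Q|²_{γ₂}) dx = ∫_{ℝ⁴} P²Q dx. -/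
noncomputable section

open MeasureTheory Complex Finset

variable {d : ℕ}

namespace BSEaux
open SchwartzMap
abbrev SM (d : ℕ) := SchwartzMap (Sp d) ℝ
def ee (j : Fin (d+1)) : Sp d := EuclideanSpace.single j 1
lemma ee_apply (j k : Fin (d+1)) : ee j k = if k = j then 1 else 0 := by
  simp [ee, EuclideanSpace.single_apply]
def DD (j : Fin (d+1)) (f : SM d) : SM d := LineDeriv.lineDerivOpCLM ℝ (SM d) (ee j) f
lemma DD_apply (j : Fin (d+1)) (f : SM d) (x : Sp d) :
    DD j f x = fderiv ℝ f x (ee j) := rfl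
lemma schwartz_tg (g : SM d) : Function.HasTemperateGrowth ⇑g := by
  refine ⟨g.smooth ⊤, fun n => ⟨0, SchwartzMap.seminorm ℝ 0 n g, fun x => ?_⟩⟩
  simpa using (SchwartzMap.norm_iteratedFDeriv_le_seminorm ℝ g n x)
def mulS (f g : SM d) : SM d :=
  SchwartzMap.bilinLeftCLM (ContinuousLinearMap.mul ℝ ℝ) (schwartz_tg g) f
lemma mulS_apply (f g : SM d) (x : Sp d) : mulS f g x = f x * g x := rfl
lemma mulS_add_left (a b g : SM d) : mulS (a + b) g = mulS a g + mulS b g :=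
  (SchwartzMap.bilinLeftCLM (ContinuousLinearMap.mul ℝ ℝ) (schwartz_tg g)).map_add a b
lemma mulS_smul_left (c : ℝ) (a g : SM d) : mulS (c • a) g = c • mulS a g :=
  (SchwartzMap.bilinLeftCLM (ContinuousLinearMap.mul ℝ ℝ) (schwartz_tg g)).map_smul c a
def xS (k : Fin (d+1)) (f : SM d) : SM d :=
  SchwartzMap.bilinLeftCLM (ContinuousLinearMap.mul ℝ ℝ)
    (EuclideanSpace.proj (𝕜 := ℝ) k).hasTemperateGrowth f
lemma xS_apply (k : Fin (d+1)) (f : SM d) (x : Sp d) : xS k f x = f x * x k := rfl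
lemma xS_add (k : Fin (d+1)) (a b : SM d) : xS k (a + b) = xS k a + xS k b :=
  (SchwartzMap.bilinLeftCLM (ContinuousLinearMap.mul ℝ ℝ)
    (EuclideanSpace.proj (𝕜 := ℝ) k).hasTemperateGrowth).map_add a b
def II : SM d →L[ℝ] ℝ := SchwartzMap.integralCLM ℝ (volume : Measure (Sp d))
lemma II_apply (f : SM d) : II f = ∫ x : Sp d, f x := rfl
lemma II_congr {f g : SM d} (h : ∀ x, f x = g x) : II f = II g := by
  congr 1; exact SchwartzMap.ext h
lemma sum_apply {ι : Type*} (s : Finset ι) (f : ι → SM d) (x : Sp d) :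
    (∑ i ∈ s, f i) x = ∑ i ∈ s, f i x := by
  classical
  induction s using Finset.cons_induction with
  | empty => simp
  | cons i s hi ih => rw [Finset.sum_cons, Finset.sum_cons, SchwartzMap.add_apply, ih]
lemma mulS_sum_right {ι : Type*} (f : SM d) (s : Finset ι) (g : ι → SM d) :
    mulS f (∑ i ∈ s, g i) = ∑ i ∈ s, mulS f (g i) := by
  apply SchwartzMap.ext; intro x
  simp only [mulS_apply, sum_apply, Finset.mul_sum]

/-- Integration by parts. -/
lemma ibp (f g : SM d) (j : Fin (d+1)) :
    II (mulS f (DD j g)) = - II (mulS (DD j f) g) := by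
  rw [II_apply, II_apply]
  have h := integral_mul_fderiv_eq_neg_fderiv_mul_of_integrable
    (μ := (volume : Measure (Sp d))) (f := ⇑f) (g := ⇑g) (v := ee j)
    ((mulS (DD j f) g).integrable) ((mulS f (DD j g)).integrable)
    ((mulS f g).integrable) (fun x _ => f.differentiableAt) (fun x _ => g.differentiableAt)
  simpa only [mulS_apply, DD_apply] using h

/-- Moment identity: `∫ x_k ∂_j h = - δ_{jk} ∫ h`. -/
lemma moment (h : SM d) (j k : Fin (d+1)) :
    II (xS k (DD j h)) = - (ee j k) * II h := by
  rw [II_apply, II_apply]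
  have hco : Differentiable ℝ (fun x : Sp d => x k) :=
    (EuclideanSpace.proj (𝕜 := ℝ) k).differentiable
  have hfd : ∀ x : Sp d, fderiv ℝ (fun x : Sp d => x k) x (ee j) = ee j k := by
    intro x
    rw [show (fun x : Sp d => x k) = ⇑(EuclideanSpace.proj (𝕜 := ℝ) k) from rfl,
      ContinuousLinearMap.fderiv]
    rfl
  have h1 : Integrable (fun x : Sp d => (fun x : Sp d => x k) x * h x) :=
    (xS k h).integrable.congr (Filter.Eventually.of_forall fun x => by
      simp [xS_apply, mul_comm])
  have h2 : Integrable (fun x : Sp d => (fun x : Sp d => x k) x * fderiv ℝ h x (ee j)) :=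
    (xS k (DD j h)).integrable.congr (Filter.Eventually.of_forall fun x => by
      simp [xS_apply, DD_apply, mul_comm])
  have h3 : Integrable (fun x : Sp d =>
      fderiv ℝ (fun x : Sp d => x k) x (ee j) * h x) := by
    apply h.integrable.const_mul (ee j k) |>.congr
    exact Filter.Eventually.of_forall fun x => by simp only [hfd x]
  have hmain := integral_mul_fderiv_eq_neg_fderiv_mul_of_integrable
    (μ := (volume : Measure (Sp d))) (f := fun x : Sp d => x k) (g := ⇑h) (v := ee j)
    h3 h2 h1 (fun x _ => hco x) (fun x _ => h.differentiableAt)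
  calc ∫ x : Sp d, (xS k (DD j h)) x
      = ∫ x : Sp d, (fun x : Sp d => x k) x * fderiv ℝ h x (ee j) := by
        congr 1; ext x; simp [xS_apply, DD_apply, mul_comm]
    _ = - ∫ x : Sp d, fderiv ℝ (fun x : Sp d => x k) x (ee j) * h x := hmain
    _ = - (ee j k) * ∫ x : Sp d, h x := by
        rw [neg_mul, neg_inj]
        rw [show (fun x : Sp d => fderiv ℝ (fun x : Sp d => x k) x (ee j) * h x)
          = fun x : Sp d => (ee j k) * h x from funext fun x => by rw [hfd x]]
        exact integral_const_mul _ _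

/-- Leibniz rule. -/
lemma DD_mulS (j : Fin (d+1)) (f g : SM d) :
    DD j (mulS f g) = mulS (DD j f) g + mulS f (DD j g) := by
  apply SchwartzMap.ext; intro x
  simp only [DD_apply, mulS_apply, SchwartzMap.add_apply]
  have : (⇑(mulS f g) : Sp d → ℝ) = fun y => f y * g y := rfl
  rw [this, fderiv_fun_mul f.differentiable.differentiableAt g.differentiable.differentiableAt]
  simp only [ContinuousLinearMap.add_apply, ContinuousLinearMap.smul_apply, smul_eq_mul,
    DD_apply, mulS_apply]
  ring
lemma DD_xS (j k : Fin (d+1)) (f : SM d) :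
    DD j (xS k f) = xS k (DD j f) + (ee j k) • f := by
  apply SchwartzMap.ext; intro x
  simp only [DD_apply, xS_apply, SchwartzMap.add_apply, SchwartzMap.smul_apply, smul_eq_mul]
  have hx : (⇑(xS k f) : Sp d → ℝ) = fun y => f y * y k := rfl
  have hco : Differentiable ℝ (fun y : Sp d => y k) :=
    (EuclideanSpace.proj (𝕜 := ℝ) k).differentiable
  rw [hx, fderiv_fun_mul f.differentiable.differentiableAt hco.differentiableAt]
  have hfd : fderiv ℝ (fun y : Sp d => y k) x (ee j) = ee j k := by
    rw [show (fun y : Sp d => y k) = ⇑(EuclideanSpace.proj (𝕜 := ℝ) k) from rfl,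
      ContinuousLinearMap.fderiv]
    rfl
  simp only [ContinuousLinearMap.add_apply, ContinuousLinearMap.smul_apply, smul_eq_mul,
    DD_apply, hfd]
  ring

/-- Symmetry of second derivatives. -/
lemma DD_comm (j k : Fin (d+1)) (f : SM d) :
    DD j (DD k f) = DD k (DD j f) := by
  apply SchwartzMap.ext; intro x
  have hdf : ∀ y, HasFDerivAt (⇑f) (fderiv ℝ f y) y :=
    fun y => f.differentiable.differentiableAt.hasFDerivAt
  have hdf' : DifferentiableAt ℝ (fderiv ℝ (⇑f)) x := by
    have : ContDiff ℝ 1 (fderiv ℝ (⇑f)) :=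
      (f.smooth ⊤).fderiv_right (by exact WithTop.coe_le_coe.mpr le_top)
    exact this.differentiable one_ne_zero x
  have hsymm := second_derivative_symmetric (f := ⇑f) (f' := fderiv ℝ (⇑f))
    (f'' := fderiv ℝ (fderiv ℝ (⇑f)) x) hdf hdf'.hasFDerivAt (ee j) (ee k)
  have key : ∀ (a b : Fin (d+1)),
      DD a (DD b f) x = fderiv ℝ (fderiv ℝ (⇑f)) x (ee a) (ee b) := by
    intro a b
    have : (⇑(DD b f) : Sp d → ℝ) = fun y => (fderiv ℝ (⇑f) y) (ee b) := rfl
    rw [DD_apply, this, fderiv_clm_apply hdf' (differentiableAt_const _)]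
    simp
  rw [key j k, key k j, hsymm]

/-- `∫ (x_k f) ∂_k f = -½ ∫ f²`. -/
lemma half (k : Fin (d+1)) (f : SM d) :
    II (mulS (xS k f) (DD k f)) = -(1/2) * II (mulS f f) := by
  have h1 := ibp (xS k f) f k
  rw [DD_xS k k f, mulS_add_left, mulS_smul_left, map_add, _root_.map_smul] at h1
  have h2 : II (mulS (xS k (DD k f)) f) = II (mulS (xS k f) (DD k f)) :=
    II_congr fun x => by simp only [mulS_apply, xS_apply]; ring
  rw [h2, ee_apply] at h1
  simp only [eq_self_iff_true, if_true, smul_eq_mul, one_mul] at h1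
  linarith

/-- off-center double-derivative term. -/
lemma Tlem (j k : Fin (d+1)) (f : SM d) :
    II (mulS (xS k (DD k f)) (DD j (DD j f))) =
      (1/2) * II (mulS (DD j f) (DD j f))
        - (ee j k) * II (mulS (DD k f) (DD j f)) := by
  have h1 := ibp (xS k (DD k f)) (DD j f) j
  rw [DD_xS j k (DD k f), mulS_add_left, mulS_smul_left, map_add, _root_.map_smul] at h1
  have h2 : II (mulS (xS k (DD j (DD k f))) (DD j f))
      = II (mulS (xS k (DD j f)) (DD k (DD j f))) := by
    rw [DD_comm j k f]
    exact II_congr fun x => by simp only [mulS_apply, xS_apply]; ring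
  rw [h2, half k (DD j f)] at h1
  rw [h1]; simp only [smul_eq_mul]; ring

lemma sumT (j : Fin (d+1)) (f : SM d) :
    (∑ k : Fin (d+1), II (mulS (xS k (DD k f)) (DD j (DD j f))))
      = (((d:ℝ)+1)/2 - 1) * II (mulS (DD j f) (DD j f)) := by
  rw [Finset.sum_congr rfl (fun k _ => Tlem j k f)]
  rw [Finset.sum_sub_distrib, Finset.sum_const, card_univ, Fintype.card_fin]
  have : (∑ k : Fin (d+1), ee j k * II (mulS (DD k f) (DD j f)))
      = II (mulS (DD j f) (DD j f)) := by
    rw [Finset.sum_congr rfl (fun k _ => by rw [ee_apply, ite_mul, one_mul, zero_mul])]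
    rw [Finset.sum_ite_eq' Finset.univ j (fun k => II (mulS (DD k f) (DD j f)))]
    simp
  rw [this, nsmul_eq_mul]
  push_cast
  ring


lemma lap_eq (γ : ℝ) (f : SM d) (x : Sp d) :
    lap γ (⇑f) x = (∑ j : Fin d, DD j.castSucc (DD j.castSucc f) x)
      + γ * DD (Fin.last d) (DD (Fin.last d) f) x := rfl

lemma eqmul (γ c : ℝ) (u N : SM d)
    (heq : ∀ x : Sp d, -c * u x + lap γ (⇑u) x + N x = 0) (g : SM d) :
    (-c) * II (mulS u g)
      + ((∑ j : Fin d, II (mulS (DD j.castSucc (DD j.castSucc u)) g))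
        + γ * II (mulS (DD (Fin.last d) (DD (Fin.last d) u)) g))
      + II (mulS N g) = 0 := by
  have hz : ((-c) • mulS u g
      + ((∑ j : Fin d, mulS (DD j.castSucc (DD j.castSucc u)) g)
        + γ • mulS (DD (Fin.last d) (DD (Fin.last d) u)) g)
      + mulS N g : SM d) = 0 := by
    apply SchwartzMap.ext; intro x
    simp only [SchwartzMap.add_apply, SchwartzMap.smul_apply, sum_apply, mulS_apply,
      smul_eq_mul, SchwartzMap.zero_apply]
    rw [← Finset.sum_mul]
    have hl := lap_eq γ u x
    linear_combination g x * heq x - g x * hl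
  have h2 := congrArg II hz
  simpa only [map_add, _root_.map_smul, map_sum, map_zero, smul_eq_mul] using h2

lemma G1 (u : SM d) :
    ∑ k : Fin (d+1), II (mulS u (xS k (DD k u))) = -(((d:ℝ)+1)/2) * II (mulS u u) := by
  have h : ∀ k : Fin (d+1), II (mulS u (xS k (DD k u))) = -(1/2) * II (mulS u u) := by
    intro k
    rw [← half k u]
    exact II_congr fun x => by simp only [mulS_apply, xS_apply]; ring
  rw [Finset.sum_congr rfl (fun k _ => h k), Finset.sum_const, card_univ, Fintype.card_fin,
    nsmul_eq_mul]
  push_cast; ring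

lemma G2 (j : Fin (d+1)) (u : SM d) :
    ∑ k : Fin (d+1), II (mulS (DD j (DD j u)) (xS k (DD k u)))
      = (((d:ℝ)+1)/2 - 1) * II (mulS (DD j u) (DD j u)) := by
  rw [Finset.sum_congr rfl (fun k _ =>
    (II_congr (f := mulS (DD j (DD j u)) (xS k (DD k u)))
      (g := mulS (xS k (DD k u)) (DD j (DD j u)))
      (fun x => by simp only [mulS_apply]; ring)))]
  exact sumT j u

lemma G3 (P Q : SM d) (k : Fin (d+1)) :
    2 * II (mulS (mulS P Q) (xS k (DD k P))) + II (mulS (mulS P P) (xS k (DD k Q)))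
      = - II (mulS (mulS P P) Q) := by
  have hm := moment (mulS (mulS P P) Q) k k
  rw [ee_apply] at hm
  simp only [eq_self_iff_true, if_true, neg_mul, one_mul] at hm
  rw [DD_mulS k (mulS P P) Q, DD_mulS k P P, mulS_add_left, xS_add, xS_add,
    map_add, map_add] at hm
  have c1 : II (xS k (mulS (mulS (DD k P) P) Q)) = II (mulS (mulS P Q) (xS k (DD k P))) :=
    II_congr fun x => by simp only [mulS_apply, xS_apply]; ring
  have c2 : II (xS k (mulS (mulS P (DD k P)) Q)) = II (mulS (mulS P Q) (xS k (DD k P))) :=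
    II_congr fun x => by simp only [mulS_apply, xS_apply]; ring
  have c3 : II (xS k (mulS (mulS P P) (DD k Q))) = II (mulS (mulS P P) (xS k (DD k Q))) :=
    II_congr fun x => by simp only [mulS_apply, xS_apply]; ring
  rw [c1, c2, c3] at hm
  linarith

lemma key_ibp (u : SM d) (j : Fin (d+1)) :
    II (mulS (DD j (DD j u)) u) = - II (mulS (DD j u) (DD j u)) := by
  have h1 := ibp u (DD j u) j
  have h2 : II (mulS (DD j (DD j u)) u) = II (mulS u (DD j (DD j u))) :=
    II_congr fun x => by simp only [mulS_apply]; ring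
  rw [h2, h1]


lemma gradSq_eq (γ : ℝ) (f : SM d) (x : Sp d) :
    gradSq γ (⇑f) x = (∑ j : Fin d, mulS (DD j.castSucc f) (DD j.castSucc f) x)
      + γ * mulS (DD (Fin.last d) f) (DD (Fin.last d) f) x := by
  simp only [gradSq, mulS_apply, Real.norm_eq_abs, sq_abs]
  have h : ∀ (j : Fin (d+1)), pdv j (⇑f) x = DD j f x := fun _ => rfl
  simp only [h, pow_two, abs_mul_abs_self]

theorem main (d : ℕ) (hd : 1 ≤ d) (γ₁ γ₂ ω : ℝ) (hγ₁ : 0 < γ₁) (hγ₂ : 0 < γ₂)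
    (P Q : SchwartzMap (Sp d) ℝ)
    (hP : ∀ x, -ω * P x + lap γ₁ (⇑P) x + P x * Q x = 0)
    (hQ : ∀ x, -(4 * ω) * Q x + lap γ₂ (⇑Q) x + (1 / 2) * (P x) ^ 2 = 0) :
    energyR γ₁ γ₂ (⇑P) (⇑Q)
      = (((d : ℝ) - 3) / (2 * ((d : ℝ) + 1)))
          * ∫ x : Sp d, (gradSq γ₁ (⇑P) x + gradSq γ₂ (⇑Q) x)
    ∧ (d = 3 → energyR γ₁ γ₂ (⇑P) (⇑Q) = 0
        ∧ (∫ x : Sp d, (gradSq γ₁ (⇑P) x + gradSq γ₂ (⇑Q) x))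
            = ∫ x : Sp d, (P x) ^ 2 * Q x) := by
  classical
  have hP' : ∀ x : Sp d, -ω * P x + lap γ₁ (⇑P) x + (mulS P Q) x = 0 := fun x => hP x
  have hQ' : ∀ x : Sp d,
      -(4*ω) * Q x + lap γ₂ (⇑Q) x + (((1:ℝ)/2) • mulS P P) x = 0 := by
    intro x
    have h := hQ x
    simp only [SchwartzMap.smul_apply, mulS_apply, smul_eq_mul]
    linear_combination h
  -- equation (2): multiply first equation by P and integrate
  have e2 : -ω * II (mulS P P)
      - ((∑ j : Fin d, II (mulS (DD j.castSucc P) (DD j.castSucc P)))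
          + γ₁ * II (mulS (DD (Fin.last d) P) (DD (Fin.last d) P)))
      + II (mulS (mulS P P) Q) = 0 := by
    have h0 := eqmul γ₁ ω P (mulS P Q) hP' P
    rw [Finset.sum_congr rfl (fun j _ => key_ibp P j.castSucc), key_ibp P (Fin.last d),
      show II (mulS (mulS P Q) P) = II (mulS (mulS P P) Q) from
        II_congr fun x => by simp only [mulS_apply]; ring,
      Finset.sum_neg_distrib] at h0
    linarith
  -- equation (3): multiply second equation by Q and integrate
  have e3 : -(4*ω) * II (mulS Q Q)
      - ((∑ j : Fin d, II (mulS (DD j.castSucc Q) (DD j.castSucc Q)))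
          + γ₂ * II (mulS (DD (Fin.last d) Q) (DD (Fin.last d) Q)))
      + (1/2) * II (mulS (mulS P P) Q) = 0 := by
    have h0 := eqmul γ₂ (4*ω) Q (((1:ℝ)/2) • mulS P P) hQ' Q
    rw [Finset.sum_congr rfl (fun j _ => key_ibp Q j.castSucc), key_ibp Q (Fin.last d),
      mulS_smul_left, _root_.map_smul, Finset.sum_neg_distrib,
      show II (mulS (mulS P P) Q) = II (mulS (mulS P P) Q) from rfl] at h0
    simp only [smul_eq_mul] at h0
    linarith
  -- equation (4): Pohozaev for the first equation
  have e4 : ω * (((d:ℝ)+1)/2) * II (mulS P P)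
      + ((((d:ℝ)+1)/2) - 1) * ((∑ j : Fin d, II (mulS (DD j.castSucc P) (DD j.castSucc P)))
          + γ₁ * II (mulS (DD (Fin.last d) P) (DD (Fin.last d) P)))
      + (∑ k : Fin (d+1), II (mulS (mulS P Q) (xS k (DD k P)))) = 0 := by
    have h0 := eqmul γ₁ ω P (mulS P Q) hP' (∑ k : Fin (d+1), xS k (DD k P))
    have t1 : II (mulS P (∑ k : Fin (d+1), xS k (DD k P)))
        = -(((d:ℝ)+1)/2) * II (mulS P P) := by
      rw [mulS_sum_right, map_sum]; exact G1 P
    have t2 : ∀ jj : Fin (d+1),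
        II (mulS (DD jj (DD jj P)) (∑ k : Fin (d+1), xS k (DD k P)))
          = (((d:ℝ)+1)/2 - 1) * II (mulS (DD jj P) (DD jj P)) := fun jj => by
      rw [mulS_sum_right, map_sum]; exact G2 jj P
    have t3 : II (mulS (mulS P Q) (∑ k : Fin (d+1), xS k (DD k P)))
        = ∑ k : Fin (d+1), II (mulS (mulS P Q) (xS k (DD k P))) := by
      rw [mulS_sum_right, map_sum]
    rw [t1, Finset.sum_congr rfl (fun j _ => t2 j.castSucc), t2 (Fin.last d), t3,
      ← Finset.mul_sum] at h0
    linear_combination h0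
  -- equation (5): Pohozaev for the second equation
  have e5 : (4*ω) * (((d:ℝ)+1)/2) * II (mulS Q Q)
      + ((((d:ℝ)+1)/2) - 1) * ((∑ j : Fin d, II (mulS (DD j.castSucc Q) (DD j.castSucc Q)))
          + γ₂ * II (mulS (DD (Fin.last d) Q) (DD (Fin.last d) Q)))
      + (1/2) * (∑ k : Fin (d+1), II (mulS (mulS P P) (xS k (DD k Q)))) = 0 := by
    have h0 := eqmul γ₂ (4*ω) Q (((1:ℝ)/2) • mulS P P) hQ' (∑ k : Fin (d+1), xS k (DD k Q))
    have t1 : II (mulS Q (∑ k : Fin (d+1), xS k (DD k Q)))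
        = -(((d:ℝ)+1)/2) * II (mulS Q Q) := by
      rw [mulS_sum_right, map_sum]; exact G1 Q
    have t2 : ∀ jj : Fin (d+1),
        II (mulS (DD jj (DD jj Q)) (∑ k : Fin (d+1), xS k (DD k Q)))
          = (((d:ℝ)+1)/2 - 1) * II (mulS (DD jj Q) (DD jj Q)) := fun jj => by
      rw [mulS_sum_right, map_sum]; exact G2 jj Q
    have t3 : II (mulS (((1:ℝ)/2) • mulS P P) (∑ k : Fin (d+1), xS k (DD k Q)))
        = (1/2) * ∑ k : Fin (d+1), II (mulS (mulS P P) (xS k (DD k Q))) := by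
      rw [mulS_smul_left, _root_.map_smul, smul_eq_mul, mulS_sum_right, map_sum]
    rw [t1, Finset.sum_congr rfl (fun j _ => t2 j.castSucc), t2 (Fin.last d), t3,
      ← Finset.mul_sum] at h0
    linear_combination h0
  -- the virial identity 2A + B = -(d+1) J
  have p : 2 * (∑ k : Fin (d+1), II (mulS (mulS P Q) (xS k (DD k P))))
      + (∑ k : Fin (d+1), II (mulS (mulS P P) (xS k (DD k Q))))
      = -((d:ℝ)+1) * II (mulS (mulS P P) Q) := by
    have h0 : ∑ k : Fin (d+1),
        (2 * II (mulS (mulS P Q) (xS k (DD k P))) + II (mulS (mulS P P) (xS k (DD k Q))))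
        = ∑ k : Fin (d+1), (- II (mulS (mulS P P) Q)) :=
      Finset.sum_congr rfl (fun k _ => G3 P Q k)
    rw [Finset.sum_add_distrib, ← Finset.mul_sum, Finset.sum_const, card_univ,
      Fintype.card_fin, nsmul_eq_mul] at h0
    push_cast at h0
    linarith
  -- key scaling relation
  have hnJ : ((d:ℝ)+1) * II (mulS (mulS P P) Q)
      = 4 * (((∑ j : Fin d, II (mulS (DD j.castSucc P) (DD j.castSucc P)))
          + γ₁ * II (mulS (DD (Fin.last d) P) (DD (Fin.last d) P)))
        + ((∑ j : Fin d, II (mulS (DD j.castSucc Q) (DD j.castSucc Q)))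
          + γ₂ * II (mulS (DD (Fin.last d) Q) (DD (Fin.last d) Q)))) := by
    linear_combination 2*((d:ℝ)+1)*e2 + 2*((d:ℝ)+1)*e3 + 4*e4 + 4*e5 - 2*p
  -- identification of the integrals
  have hIIW : (∫ x : Sp d, (gradSq γ₁ (⇑P) x + gradSq γ₂ (⇑Q) x))
      = (((∑ j : Fin d, II (mulS (DD j.castSucc P) (DD j.castSucc P)))
          + γ₁ * II (mulS (DD (Fin.last d) P) (DD (Fin.last d) P)))
        + ((∑ j : Fin d, II (mulS (DD j.castSucc Q) (DD j.castSucc Q)))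
          + γ₂ * II (mulS (DD (Fin.last d) Q) (DD (Fin.last d) Q)))) := by
    have h1 : (fun x : Sp d => gradSq γ₁ (⇑P) x + gradSq γ₂ (⇑Q) x)
        = ⇑(((∑ j : Fin d, mulS (DD j.castSucc P) (DD j.castSucc P))
            + γ₁ • mulS (DD (Fin.last d) P) (DD (Fin.last d) P))
          + ((∑ j : Fin d, mulS (DD j.castSucc Q) (DD j.castSucc Q))
            + γ₂ • mulS (DD (Fin.last d) Q) (DD (Fin.last d) Q))) := by
      funext x
      simp only [SchwartzMap.add_apply, SchwartzMap.smul_apply, sum_apply, smul_eq_mul,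
        gradSq_eq]
    have h2 : (∫ x : Sp d, (gradSq γ₁ (⇑P) x + gradSq γ₂ (⇑Q) x))
        = II (((∑ j : Fin d, mulS (DD j.castSucc P) (DD j.castSucc P))
            + γ₁ • mulS (DD (Fin.last d) P) (DD (Fin.last d) P))
          + ((∑ j : Fin d, mulS (DD j.castSucc Q) (DD j.castSucc Q))
            + γ₂ • mulS (DD (Fin.last d) Q) (DD (Fin.last d) Q))) := by
      rw [II_apply]; congr 1
    rw [h2]
    simp only [map_add, _root_.map_smul, map_sum, smul_eq_mul]
  have hJint : (∫ x : Sp d, (P x)^2 * Q x) = II (mulS (mulS P P) Q) := by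
    rw [II_apply]; congr 1; funext x
    simp only [mulS_apply, pow_two]
  have hE : energyR γ₁ γ₂ (⇑P) (⇑Q)
      = (1/2) * ((∫ x : Sp d, (gradSq γ₁ (⇑P) x + gradSq γ₂ (⇑Q) x))
          - II (mulS (mulS P P) Q)) := by
    rw [energyR]
    congr 1
    have hsub : (fun x : Sp d => gradSq γ₁ (⇑P) x + gradSq γ₂ (⇑Q) x - (P x)^2 * Q x)
        = fun x : Sp d => (gradSq γ₁ (⇑P) x + gradSq γ₂ (⇑Q) x) - (mulS (mulS P P) Q) x := by
      funext x; simp only [mulS_apply, pow_two]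
    rw [hsub]
    rw [integral_sub ?hint1 ?hint2]
    · rw [show (∫ x : Sp d, (mulS (mulS P P) Q) x) = II (mulS (mulS P P) Q) from rfl]
    case hint1 =>
      apply Integrable.congr (f := ⇑(((∑ j : Fin d, mulS (DD j.castSucc P) (DD j.castSucc P))
            + γ₁ • mulS (DD (Fin.last d) P) (DD (Fin.last d) P))
          + ((∑ j : Fin d, mulS (DD j.castSucc Q) (DD j.castSucc Q))
            + γ₂ • mulS (DD (Fin.last d) Q) (DD (Fin.last d) Q))))
        (SchwartzMap.integrable _)
      apply Filter.Eventually.of_forall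
      intro x
      simp only [SchwartzMap.add_apply, SchwartzMap.smul_apply, sum_apply, smul_eq_mul,
        gradSq_eq]
    case hint2 => exact (mulS (mulS P P) Q).integrable
  -- final algebra
  have hd1 : ((d:ℝ)+1) ≠ 0 := by positivity
  have hmain : energyR γ₁ γ₂ (⇑P) (⇑Q)
      = (((d : ℝ) - 3) / (2 * ((d : ℝ) + 1)))
          * ∫ x : Sp d, (gradSq γ₁ (⇑P) x + gradSq γ₂ (⇑Q) x) := by
    rw [hE, hIIW]
    field_simp
    linear_combination (-1 : ℝ) * hnJ
  refine ⟨hmain, fun h3 => ?_⟩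
  subst h3
  constructor
  · rw [hmain]; norm_num
  · rw [hIIW, hJint]
    norm_num at hnJ
    linarith

end BSEaux

/-- energy of bound states when `β = 0`:
`E(P,Q) = ((d−3)/(2(d+1))) ∫(|∇P|²_{γ₁}+|∇Q|²_{γ₂})`; in particular for `d = 3`,
`E(P,Q) = 0` and `∫(|∇P|²_{γ₁}+|∇Q|²_{γ₂}) = ∫P²Q`. -/
theorem bound_state_energy
    (d : ℕ) (hd : 1 ≤ d) (γ₁ γ₂ ω : ℝ) (hγ₁ : 0 < γ₁) (hγ₂ : 0 < γ₂)
    (P Q : SchwartzMap (Sp d) ℝ)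
    (hP : ∀ x, -ω * P x + lap γ₁ (⇑P) x + P x * Q x = 0)
    (hQ : ∀ x, -(4 * ω) * Q x + lap γ₂ (⇑Q) x + (1 / 2) * (P x) ^ 2 = 0) :
    energyR γ₁ γ₂ (⇑P) (⇑Q)
      = (((d : ℝ) - 3) / (2 * ((d : ℝ) + 1)))
          * ∫ x : Sp d, (gradSq γ₁ (⇑P) x + gradSq γ₂ (⇑Q) x)
    ∧ (d = 3 → energyR γ₁ γ₂ (⇑P) (⇑Q) = 0
        ∧ (∫ x : Sp d, (gradSq γ₁ (⇑P) x + gradSq γ₂ (⇑Q) x))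
            = ∫ x : Sp d, (P x) ^ 2 * Q x) :=
  BSEaux.main d hd γ₁ γ₂ ω hγ₁ hγ₂ P Q hP hQ
end
end

section
/- Mass-preserving dilation minimizes the energy in the subcritical case (core of Lemma 4.2): Let 1 ≤ d ≤ 2, γ₁, γ₂ > 0, β = 0, and let W = (w,z) be a Schwartz pair on ℝ^{d+1} with K(W) > 0 and J(W) > 0. For λ > 0 define W_λ(x) = λ^{(d+1)/2} W(λx) and f(λ) = E(W_λ). Then: (a) f(λ) = ½λ² K(W) − ½λ^{(d+1)/2} J(W); (b) f has a unique global minimizer λ₀ ∈ (0,∞); and (c) the pair Z = W_{λ₀} satisfies K(Z) = ((d+1)/4) J(Z) and E(Z) = ((d−3)/(2(d+1))) K(Z). -/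
noncomputable section

open MeasureTheory Complex Finset

variable {d : ℕ}

/-- The mass-preserving dilation `W_λ(x) = λ^{(d+1)/2} W(λx)` (scalar component). -/
def dil (d : ℕ) (lam : ℝ) (w : Sp d → ℂ) : Sp d → ℂ :=
  fun x => ((lam ^ (((d : ℝ) + 1) / 2) : ℝ) : ℂ) * w (lam • x)

/-- The energy (with `β = 0`) along the dilation: `f(λ) = E(W_λ) = ½K(W_λ) − ½J(W_λ)`. -/
def fdil (d : ℕ) (γ₁ γ₂ : ℝ) (w z : Sp d → ℂ) (lam : ℝ) : ℝ :=
  (1 / 2) * Kfun γ₁ γ₂ (dil d lam w) (dil d lam z)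
    - (1 / 2) * Jfun (dil d lam w) (dil d lam z)


section Aux

variable {d : ℕ}

lemma pdv_dil (lam : ℝ) (w : SchwartzMap (Sp d) ℂ) (j : Fin (d + 1)) (x : Sp d) :
    pdv j (dil d lam w) x
      = ((lam ^ (((d : ℝ) + 1) / 2) : ℝ) : ℂ) * ((lam : ℂ) * pdv j (⇑w) (lam • x)) := by
  have hsm : HasFDerivAt (fun y : Sp d => lam • y)
      (lam • ContinuousLinearMap.id ℝ (Sp d)) x := (hasFDerivAt_id x).const_smul lam
  have hw := (w.differentiableAt (x := lam • x)).hasFDerivAt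
  have hcomp := hw.comp x hsm
  have hdil : HasFDerivAt (dil d lam w)
      (((lam ^ (((d : ℝ) + 1) / 2) : ℝ) : ℂ) •
        ((fderiv ℝ (⇑w) (lam • x)).comp (lam • ContinuousLinearMap.id ℝ (Sp d)))) x :=
    hcomp.const_mul _
  rw [pdv, hdil.fderiv]
  simp only [ContinuousLinearMap.smul_apply, ContinuousLinearMap.coe_comp', Function.comp_apply,
    ContinuousLinearMap.coe_smul', Pi.smul_apply, ContinuousLinearMap.coe_id', id_eq]
  rw [(fderiv ℝ (⇑w) (lam • x)).map_smul, smul_eq_mul, pdv, Complex.real_smul]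

lemma gradSq_dil (γ : ℝ) {lam : ℝ} (hlam : 0 < lam) (w : SchwartzMap (Sp d) ℂ) (x : Sp d) :
    gradSq γ (dil d lam w) x = lam ^ ((d : ℝ) + 3) * gradSq γ (⇑w) (lam • x) := by
  have h1 : (lam ^ (((d : ℝ) + 1) / 2)) ^ 2 * lam ^ 2 = lam ^ ((d : ℝ) + 3) := by
    rw [← Real.rpow_natCast (lam ^ (((d : ℝ) + 1) / 2)) 2, ← Real.rpow_mul hlam.le,
      ← Real.rpow_natCast lam 2, ← Real.rpow_add hlam]
    congr 1; push_cast; ring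
  have hfac : ∀ v : ℂ, ‖((lam ^ (((d : ℝ) + 1) / 2) : ℝ) : ℂ) * ((lam : ℂ) * v)‖ ^ 2
      = lam ^ ((d : ℝ) + 3) * ‖v‖ ^ 2 := by
    intro v
    rw [norm_mul, norm_mul, Complex.norm_real, Complex.norm_real, Real.norm_eq_abs,
      Real.norm_eq_abs, abs_of_pos hlam, abs_of_pos (Real.rpow_pos_of_pos hlam _), ← h1]
    ring
  simp only [gradSq, pdv_dil, hfac]
  rw [← Finset.mul_sum]
  ring

lemma Kfun_dil (γ₁ γ₂ : ℝ) {lam : ℝ} (hlam : 0 < lam) (w z : SchwartzMap (Sp d) ℂ) :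
    Kfun γ₁ γ₂ (dil d lam w) (dil d lam z) = lam ^ 2 * Kfun γ₁ γ₂ (⇑w) (⇑z) := by
  unfold Kfun
  have hpt : ∀ x : Sp d, gradSq γ₁ (dil d lam w) x + gradSq γ₂ (dil d lam z) x
      = lam ^ ((d : ℝ) + 3) *
        ((fun y => gradSq γ₁ (⇑w) y + gradSq γ₂ (⇑z) y) (lam • x)) := by
    intro x; rw [gradSq_dil γ₁ hlam, gradSq_dil γ₂ hlam]; ring
  simp_rw [hpt]
  rw [MeasureTheory.integral_const_mul,
    MeasureTheory.Measure.integral_comp_smul volume (fun y => gradSq γ₁ (⇑w) y + gradSq γ₂ (⇑z) y) lam,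
    smul_eq_mul, ← mul_assoc]
  congr 1
  rw [finrank_euclideanSpace, Fintype.card_fin,
    abs_of_pos (by positivity), ← Real.rpow_natCast lam (d + 1), ← Real.rpow_neg hlam.le,
    ← Real.rpow_add hlam, ← Real.rpow_natCast lam 2]
  congr 1; push_cast; ring

lemma Jfun_dil {lam : ℝ} (hlam : 0 < lam) (w z : SchwartzMap (Sp d) ℂ) :
    Jfun (dil d lam w) (dil d lam z) = lam ^ (((d : ℝ) + 1) / 2) * Jfun (⇑w) (⇑z) := by
  unfold Jfun
  have hpt : ∀ x : Sp d, ((starRingEnd ℂ) (dil d lam w x) ^ 2 * dil d lam z x).re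
      = (lam ^ (((d : ℝ) + 1) / 2)) ^ 3 *
        ((fun y => ((starRingEnd ℂ) (w y) ^ 2 * z y).re) (lam • x)) := by
    intro x
    have : (starRingEnd ℂ) (dil d lam w x) ^ 2 * dil d lam z x
        = (((lam ^ (((d : ℝ) + 1) / 2)) ^ 3 : ℝ) : ℂ)
          * ((starRingEnd ℂ) (w (lam • x)) ^ 2 * z (lam • x)) := by
      simp only [dil, map_mul, Complex.conj_ofReal]
      push_cast
      ring
    rw [this, Complex.re_ofReal_mul]
  simp_rw [hpt]
  rw [MeasureTheory.integral_const_mul,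
    MeasureTheory.Measure.integral_comp_smul volume (fun y => ((starRingEnd ℂ) (w y) ^ 2 * z y).re) lam,
    smul_eq_mul, ← mul_assoc]
  congr 1
  rw [finrank_euclideanSpace, Fintype.card_fin,
    abs_of_pos (by positivity), ← Real.rpow_natCast lam (d + 1), ← Real.rpow_neg hlam.le,
    ← Real.rpow_natCast (lam ^ (((d:ℝ)+1)/2)) 3, ← Real.rpow_mul hlam.le, ← Real.rpow_add hlam]
  congr 1; push_cast; ring

end Aux

lemma strict_min_lemma {a b p : ℝ} (ha : 0 < a) (hb : 0 < b) (hp1 : 1 ≤ p) (hp2 : p < 2) :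
    ∃ l0 : ℝ, 0 < l0 ∧ l0 ^ (2 - p) = p * b / (2 * a) ∧
      ∀ l : ℝ, 0 < l → l ≠ l0 →
        a * l0 ^ (2 : ℕ) - b * l0 ^ p < a * l ^ (2 : ℕ) - b * l ^ p := by
  have h2p : 0 < 2 - p := by linarith
  have hc : 0 < p * b / (2 * a) := by positivity
  set c := p * b / (2 * a) with hcdef
  set l0 := c ^ ((2 - p)⁻¹) with hl0def
  have hl0 : 0 < l0 := Real.rpow_pos_of_pos hc _
  have hl0e : l0 ^ (2 - p) = c := by
    rw [hl0def, ← Real.rpow_mul hc.le, inv_mul_cancel₀ h2p.ne', Real.rpow_one]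
  set g : ℝ → ℝ := fun l => a * l ^ (2 : ℕ) - b * l ^ p with hgdef
  have hderiv : ∀ l : ℝ, HasDerivAt g (2 * a * l - b * (p * l ^ (p - 1))) l := by
    intro l
    have h := ((hasDerivAt_pow 2 l).const_mul a).sub
      ((Real.hasDerivAt_rpow_const (p := p) (Or.inr hp1)).const_mul b)
    refine h.congr_deriv ?_
    push_cast; ring
  have hdiff : Differentiable ℝ g := fun l => (hderiv l).differentiableAt
  have hderiv' : ∀ l : ℝ, deriv g l = 2 * a * l - b * (p * l ^ (p - 1)) :=
    fun l => (hderiv l).deriv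
  have hfac : ∀ x : ℝ, 0 < x →
      2 * a * x - b * (p * x ^ (p - 1)) = x ^ (p - 1) * (2 * a * x ^ (2 - p) - b * p) := by
    intro x hx
    have hxx : x ^ (p - 1) * x ^ (2 - p) = x := by
      rw [← Real.rpow_add hx]
      norm_num
    linear_combination (-2 * a) * hxx
  have hmono : StrictMonoOn g (Set.Ici l0) := by
    apply strictMonoOn_of_deriv_pos (convex_Ici l0) hdiff.continuous.continuousOn
    intro x hx
    rw [interior_Ici] at hx
    have hx0 : 0 < x := lt_trans hl0 hx
    rw [hderiv' x, hfac x hx0]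
    apply mul_pos (Real.rpow_pos_of_pos hx0 _)
    have h1 : l0 ^ (2 - p) < x ^ (2 - p) := Real.rpow_lt_rpow hl0.le hx h2p
    rw [hl0e, hcdef] at h1
    have h2 := (div_lt_iff₀ (by linarith : (0 : ℝ) < 2 * a)).mp h1
    linarith
  have hanti : StrictAntiOn g (Set.Ioc 0 l0) := by
    apply strictAntiOn_of_deriv_neg (convex_Ioc 0 l0) hdiff.continuous.continuousOn
    intro x hx
    rw [interior_Ioc] at hx
    have hx0 : 0 < x := hx.1
    rw [hderiv' x, hfac x hx0]
    have h1 : x ^ (2 - p) < l0 ^ (2 - p) := Real.rpow_lt_rpow hx0.le hx.2 h2p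
    rw [hl0e, hcdef] at h1
    have h2 := (lt_div_iff₀ (by linarith : (0 : ℝ) < 2 * a)).mp h1
    exact mul_neg_of_pos_of_neg (Real.rpow_pos_of_pos hx0 _) (by linarith)
  refine ⟨l0, hl0, hl0e, ?_⟩
  intro l hl hne
  rcases lt_or_gt_of_ne hne with hlt | hgt
  · exact hanti ⟨hl, hlt.le⟩ ⟨hl0, le_refl l0⟩ hlt
  · exact hmono (Set.self_mem_Ici) hgt.le hgt

/-- mass-preserving dilation minimizes the energy in the subcritical case:
(a) `f(λ) = ½λ²K(W) − ½λ^{(d+1)/2}J(W)`; (b) `f` has a unique global minimizer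
`λ₀ ∈ (0,∞)`; (c) `Z = W_{λ₀}` satisfies `K(Z) = ((d+1)/4)J(Z)` and
`E(Z) = ((d−3)/(2(d+1)))K(Z)`. -/
theorem dilation_minimizes_energy
    (d : ℕ) (hd1 : 1 ≤ d) (hd2 : d ≤ 2) (γ₁ γ₂ : ℝ) (hγ₁ : 0 < γ₁) (hγ₂ : 0 < γ₂)
    (w z : SchwartzMap (Sp d) ℂ)
    (hK : 0 < Kfun γ₁ γ₂ (⇑w) (⇑z)) (hJ : 0 < Jfun (⇑w) (⇑z)) :
    (∀ lam : ℝ, 0 < lam →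
      fdil d γ₁ γ₂ (⇑w) (⇑z) lam
        = (1 / 2) * lam ^ 2 * Kfun γ₁ γ₂ (⇑w) (⇑z)
          - (1 / 2) * lam ^ (((d : ℝ) + 1) / 2) * Jfun (⇑w) (⇑z))
    ∧ ∃ lam₀ : ℝ, 0 < lam₀
        ∧ (∀ lam : ℝ, 0 < lam → fdil d γ₁ γ₂ (⇑w) (⇑z) lam₀ ≤ fdil d γ₁ γ₂ (⇑w) (⇑z) lam)
        ∧ (∀ lam' : ℝ, 0 < lam' →
            (∀ lam : ℝ, 0 < lam → fdil d γ₁ γ₂ (⇑w) (⇑z) lam' ≤ fdil d γ₁ γ₂ (⇑w) (⇑z) lam)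
            → lam' = lam₀)
        ∧ Kfun γ₁ γ₂ (dil d lam₀ (⇑w)) (dil d lam₀ (⇑z))
            = (((d : ℝ) + 1) / 4) * Jfun (dil d lam₀ (⇑w)) (dil d lam₀ (⇑z))
        ∧ fdil d γ₁ γ₂ (⇑w) (⇑z) lam₀
            = (((d : ℝ) - 3) / (2 * ((d : ℝ) + 1)))
                * Kfun γ₁ γ₂ (dil d lam₀ (⇑w)) (dil d lam₀ (⇑z)) := by
  have hd1' : (1 : ℝ) ≤ (d : ℝ) := by exact_mod_cast hd1
  have hd2' : (d : ℝ) ≤ 2 := by exact_mod_cast hd2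
  have hp1 : 1 ≤ ((d : ℝ) + 1) / 2 := by linarith
  have hp2 : ((d : ℝ) + 1) / 2 < 2 := by linarith
  have ha : ∀ lam : ℝ, 0 < lam →
      fdil d γ₁ γ₂ (⇑w) (⇑z) lam
        = (1 / 2) * lam ^ 2 * Kfun γ₁ γ₂ (⇑w) (⇑z)
          - (1 / 2) * lam ^ (((d : ℝ) + 1) / 2) * Jfun (⇑w) (⇑z) := by
    intro lam hlam
    unfold fdil
    rw [Kfun_dil γ₁ γ₂ hlam, Jfun_dil hlam]
    ring
  obtain ⟨l0, hl0, hl0e, hstrict⟩ :=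
    strict_min_lemma (a := Kfun γ₁ γ₂ (⇑w) (⇑z) / 2) (b := Jfun (⇑w) (⇑z) / 2)
      (p := ((d : ℝ) + 1) / 2) (by linarith) (by linarith) hp1 hp2
  have hfg : ∀ lam : ℝ, 0 < lam →
      fdil d γ₁ γ₂ (⇑w) (⇑z) lam
        = Kfun γ₁ γ₂ (⇑w) (⇑z) / 2 * lam ^ (2 : ℕ)
          - Jfun (⇑w) (⇑z) / 2 * lam ^ (((d : ℝ) + 1) / 2) := by
    intro lam hlam; rw [ha lam hlam]; ring
  have h2 : (l0 : ℝ) ^ (2 : ℕ)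
      = l0 ^ (2 - ((d : ℝ) + 1) / 2) * l0 ^ (((d : ℝ) + 1) / 2) := by
    rw [← Real.rpow_add hl0, ← Real.rpow_natCast l0 2]
    norm_num
  have hKne : Kfun γ₁ γ₂ (⇑w) (⇑z) ≠ 0 := ne_of_gt hK
  have hrel4 : 4 * (l0 ^ (2 : ℕ) * Kfun γ₁ γ₂ (⇑w) (⇑z))
      = ((d : ℝ) + 1) * (l0 ^ (((d : ℝ) + 1) / 2) * Jfun (⇑w) (⇑z)) := by
    rw [h2, hl0e]
    field_simp
    ring
  have hc1 : Kfun γ₁ γ₂ (dil d l0 (⇑w)) (dil d l0 (⇑z))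
      = (((d : ℝ) + 1) / 4) * Jfun (dil d l0 (⇑w)) (dil d l0 (⇑z)) := by
    rw [Kfun_dil γ₁ γ₂ hl0, Jfun_dil hl0]
    linear_combination (1 / 4 : ℝ) * hrel4
  have hc2 : fdil d γ₁ γ₂ (⇑w) (⇑z) l0
      = (((d : ℝ) - 3) / (2 * ((d : ℝ) + 1)))
          * Kfun γ₁ γ₂ (dil d l0 (⇑w)) (dil d l0 (⇑z)) := by
    rw [ha l0 hl0, Kfun_dil γ₁ γ₂ hl0]
    have hdd2 : (2 * ((d : ℝ) + 1)) ≠ 0 := by positivity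
    rw [div_mul_eq_mul_div (((d : ℝ) - 3)) (2 * ((d : ℝ) + 1))
      (l0 ^ 2 * Kfun γ₁ γ₂ (⇑w) (⇑z)), eq_div_iff hdd2]
    linear_combination hrel4
  refine ⟨ha, l0, hl0, ?_, ?_, hc1, hc2⟩
  · intro lam hlam
    by_cases he : lam = l0
    · subst he; exact le_refl _
    · rw [hfg lam hlam, hfg l0 hl0]
      exact le_of_lt (hstrict lam hlam he)
  · intro l' hl' hmin
    by_contra hne
    have h1 := hmin l0 hl0
    have hlt := hstrict l' hl' hne
    rw [hfg l' hl', hfg l0 hl0] at h1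
    linarith
end
end
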